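/- Let K be a field complete with respect to a discrete valuation, and let D be a finite-dimensional central division algebra over K. Then the valuation on K extends uniquely to a valuation on D, given on α ∈ D^* by v(α) = (1/n)·v(nr(α)) where n^2 = dim_K D and nr is the reduced norm; in particular, for a quaternion division algebra, v(α) = (1/2)·v(x1^2 - a x2^2 - b x3^2 + a b x4^2). -/

import Mathlib

open Quaternion QuaternionAlgebra

section Aux

variable {F : Type*} [Field F] {a b : F}

private lemma nr_mul' (α β : ℍ[F,a,b]) :
    ((α * β) * star (α * β)).re = (α * star α).re * (β * star β).re := by
  have h : (α * β) * star (α * β) = (((β * star β).re : F) : ℍ[F,a,b]) * (α * star α) := by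
    rw [star_mul]
    calc α * β * (star β * star α) = α * (β * star β) * star α := by noncomm_ring
    _ = α * (((β * star β).re : F) : ℍ[F,a,b]) * star α := by rw [← mul_star_eq_coe]
    _ = (((β * star β).re : F) : ℍ[F,a,b]) * (α * star α) := by
        rw [← coe_commutes, mul_assoc]
  rw [h, coe_mul_eq_smul, QuaternionAlgebra.re_smul, smul_eq_mul, mul_comm]

private lemma star_eq' (α : ℍ[F,a,b]) : star α = ((2 * α.re : F) : ℍ[F,a,b]) - α := by
  have h := self_add_star' α
  simp only [zero_mul, add_zero] at h
  rw [← h, add_sub_cancel_left]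

private lemma quad_rel' (α : ℍ[F,a,b]) :
    α * α = ((2 * α.re : F) : ℍ[F,a,b]) * α - (((α * star α).re : F) : ℍ[F,a,b]) := by
  have h1 : ((((α * star α).re : F)) : ℍ[F,a,b]) = α * star α := (mul_star_eq_coe α).symm
  rw [h1, star_eq' α, mul_sub, mul_coe_eq_smul, coe_mul_eq_smul]
  abel

private lemma factor' (α : ℍ[F,a,b]) (r s : F) (hsum : r + s = 2 * α.re)
    (hprod : r * s = (α * star α).re) : (α - (r : ℍ[F,a,b])) * (α - (s : ℍ[F,a,b])) = 0 := by
  have expand : (α - (r : ℍ[F,a,b])) * (α - (s : ℍ[F,a,b]))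
      = α * α - (((r + s : F)) : ℍ[F,a,b]) * α + (((r * s : F)) : ℍ[F,a,b]) := by
    rw [sub_mul, mul_sub, mul_sub, coe_add, add_mul, coe_mul, mul_coe_eq_smul,
      coe_mul_eq_smul, coe_mul_eq_smul, coe_mul_eq_smul]
    abel
  rw [expand, hsum, hprod, quad_rel' α]
  abel

private lemma nr_one_add' (γ : ℍ[F,a,b]) :
    ((1 + γ) * star (1 + γ)).re = 1 + 2 * γ.re + (γ * star γ).re := by
  simp [star_add, mul_add, add_mul, QuaternionAlgebra.re_mul, QuaternionAlgebra.re_star, QuaternionAlgebra.imI_star, QuaternionAlgebra.imJ_star, QuaternionAlgebra.imK_star]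
  ring

private lemma nr_coe' (x : F) : (((x : ℍ[F,a,b])) * star ((x : ℍ[F,a,b]))).re = x * x := by
  have : (α : ℍ[F,a,b]) → ((α : ℍ[F,a,b]) * star α).re
      = α.re^2 - a * α.imI^2 - b * α.imJ^2 + a * b * α.imK^2 := by
    intro α
    simp [QuaternionAlgebra.re_mul, QuaternionAlgebra.re_star, QuaternionAlgebra.imI_star, QuaternionAlgebra.imJ_star, QuaternionAlgebra.imK_star]
    ring
  simp [this, sq]

private lemma quad_root_aux {K : Type*} [NormedField K] [CompleteSpace K]
    (hna : ∀ x y : K, ‖x + y‖ ≤ max ‖x‖ ‖y‖) (ε : K) (hε : ‖ε‖ < 1) :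
    ∃ y : K, y * y - y + ε = 0 := by
  set y : ℕ → K := fun n => Nat.rec (0 : K) (fun _ yn => ε + yn * yn) n with hy
  have hstep : ∀ n, y (n + 1) = ε + y n * y n := fun n => rfl
  have hbound : ∀ n, ‖y n‖ ≤ ‖ε‖ := by
    intro n
    induction n with
    | zero => simp [hy]
    | succ n ih =>
      rw [hstep]
      refine (hna _ _).trans (max_le le_rfl ?_)
      rw [norm_mul]
      nlinarith [norm_nonneg (y n), norm_nonneg ε]
  have hdiff : ∀ n, ‖y (n + 1) - y n‖ ≤ ‖ε‖ * ‖ε‖ ^ n := by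
    intro n
    induction n with
    | zero =>
      have h0 : y 0 = 0 := rfl
      rw [hstep, h0]
      simp
    | succ n ih =>
      have heq : y (n + 2) - y (n + 1) = (y (n + 1) + y n) * (y (n + 1) - y n) := by
        rw [hstep (n+1), hstep n]; ring
      rw [heq, norm_mul, pow_succ]
      have h1 : ‖y (n + 1) + y n‖ ≤ ‖ε‖ := (hna _ _).trans (max_le (hbound (n+1)) (hbound n))
      calc ‖y (n + 1) + y n‖ * ‖y (n + 1) - y n‖ ≤ ‖ε‖ * (‖ε‖ * ‖ε‖ ^ n) := by
            exact mul_le_mul h1 ih (norm_nonneg _) (norm_nonneg _)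
        _ = ‖ε‖ * (‖ε‖ ^ n * ‖ε‖) := by ring
  have hcauchy : CauchySeq y := by
    apply cauchySeq_of_le_geometric ‖ε‖ ‖ε‖ hε
    intro n
    rw [dist_eq_norm, norm_sub_rev]
    exact hdiff n
  obtain ⟨L, hL⟩ := cauchySeq_tendsto_of_complete hcauchy
  have h1 : Filter.Tendsto (fun n => y (n + 1)) Filter.atTop (nhds L) :=
    hL.comp (Filter.tendsto_add_atTop_nat 1)
  have h2 : Filter.Tendsto (fun n => ε + y n * y n) Filter.atTop (nhds (ε + L * L)) :=
    Filter.Tendsto.const_add ε (hL.mul hL)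
  have hEq : L = ε + L * L := tendsto_nhds_unique h1 h2
  exact ⟨L, by linear_combination -hEq⟩

end Aux

/-- Let `K` be a field complete with respect to a discrete (rank one, here `ℝ≥0`-valued)
valuation `v`, and let `D = H(a,b)` be a quaternion division algebra over `K`
(characteristic ≠ 2).  Then `v` extends uniquely to a valuation `w` on `D`
(multiplicative, ultrametric, vanishing only at `0`), and the extension is given by
`w(α)² = v(nr(α))`, where `nr(α) = α·ᾱ = x₁² - a x₂² - b x₃² + a b x₄²` is the reduced
norm; i.e. `w(α) = v(nr α)^{1/2}`. -/
theorem unique_valuation_extension_quaternion_division_algebra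
    (K : Type*) [Field K] [hv : Valued K NNReal] [CompleteSpace K]
    (hdisc : ∃ π : K, Valued.v π ≠ 0 ∧ Valued.v π ≠ 1 ∧
      ∀ x : K, x ≠ 0 → ∃ n : ℤ, Valued.v x = Valued.v π ^ n)
    (h2 : (2 : K) ≠ 0) (a b : K) (ha : a ≠ 0) (hb : b ≠ 0)
    (hdiv : ∀ α : ℍ[K, a, b], α ≠ 0 → IsUnit α) :
    ∃ w : ℍ[K, a, b] → NNReal,
      ((∀ x : K, w ((x : ℍ[K, a, b])) = Valued.v x) ∧
        (∀ α β : ℍ[K, a, b], w (α * β) = w α * w β) ∧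
        (∀ α β : ℍ[K, a, b], w (α + β) ≤ max (w α) (w β)) ∧
        (∀ α : ℍ[K, a, b], w α = 0 ↔ α = 0)) ∧
      (∀ α : ℍ[K, a, b], (w α) ^ 2 = Valued.v ((α * star α).re)) ∧
      (∀ w' : ℍ[K, a, b] → NNReal,
        ((∀ x : K, w' ((x : ℍ[K, a, b])) = Valued.v x) ∧
          (∀ α β : ℍ[K, a, b], w' (α * β) = w' α * w' β) ∧
          (∀ α β : ℍ[K, a, b], w' (α + β) ≤ max (w' α) (w' β)) ∧
          (∀ α : ℍ[K, a, b], w' α = 0 ↔ α = 0)) → w' = w) := by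
  classical
  obtain ⟨π, hπ0, hπ1, -⟩ := hdisc
  have hKcomp : @CompleteSpace K hv.toUniformSpace := inferInstance
  letI : Valuation.RankOne (hv.v) :=
    { hom' := MonoidWithZeroHom.ValueGroup₀.embedding
      strictMono' := MonoidWithZeroHom.ValueGroup₀.embedding_strictMono
      exists_val_nontrivial := ⟨π, hπ0, hπ1⟩ }
  letI : NormedField K := Valued.toNormedField K NNReal
  haveI : CompleteSpace K := hKcomp
  have hna : ∀ x y : K, ‖x + y‖ ≤ max ‖x‖ ‖y‖ := fun x y => Valuation.norm_add_le Valued.v x y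
  -- no zero divisors
  have hzd : ∀ x y : ℍ[K,a,b], x * y = 0 → x = 0 ∨ y = 0 := by
    intro x y hxy
    by_cases hx : x = 0
    · exact Or.inl hx
    · right
      obtain ⟨u, hu⟩ := hdiv x hx
      calc y = ↑u⁻¹ * (↑u * y) := by rw [← mul_assoc, Units.inv_mul, one_mul]
        _ = ↑u⁻¹ * (x * y) := by rw [hu]
        _ = 0 := by rw [hxy, mul_zero]
  -- v 2 ≤ 1
  have hv2 : Valued.v (2 : K) ≤ 1 := by
    have h21 : (2 : K) = 1 + 1 := by norm_num
    rw [h21]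
    refine le_trans (Valuation.map_add_le_max' _ _ _) ?_
    simp
  -- key trace bound
  have key : ∀ γ : ℍ[K,a,b], Valued.v ((γ * star γ).re) ≤ 1 →
      Valued.v (2 * γ.re) ≤ 1 := by
    intro γ hn
    by_contra hcon
    have hvt : (1 : NNReal) < Valued.v (2 * γ.re) := not_le.mp hcon
    set t : K := 2 * γ.re with ht
    set n : K := (γ * star γ).re with hnd
    have ht0 : t ≠ 0 := by
      intro h
      rw [h, map_zero] at hvt
      exact (not_lt.mpr zero_le_one) hvt
    have hvt2 : (1 : NNReal) < Valued.v (t ^ 2) := by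
      rw [map_pow]
      exact one_lt_pow₀ hvt (by norm_num)
    set ε : K := n / t ^ 2 with hε
    have hvε : Valued.v ε < 1 := by
      rw [hε, map_div₀]
      rw [div_lt_one (lt_trans zero_lt_one hvt2)]
      exact lt_of_le_of_lt hn hvt2
    have hεnorm : ‖ε‖ < 1 := by
      show ((MonoidWithZeroHom.ValueGroup₀.embedding (Valued.v.restrict ε) : NNReal) : ℝ) < 1
      rw [Valuation.embedding_restrict]
      exact_mod_cast hvε
    obtain ⟨y, hy⟩ := quad_root_aux hna ε hεnorm
    have hneq : n = ε * t ^ 2 := by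
      rw [hε]; field_simp
    have hsum : (t * y) + (t - t * y) = 2 * γ.re := by rw [ht]; ring
    have hprod : (t * y) * (t - t * y) = (γ * star γ).re := by
      rw [← hnd, hneq]
      linear_combination (-(t^2)) * hy
    have hfac := factor' γ (t * y) (t - t * y) hsum hprod
    have hγK : ∃ c : K, γ = (c : ℍ[K,a,b]) := by
      rcases hzd _ _ hfac with h | h
      · exact ⟨t * y, by rwa [sub_eq_zero] at h⟩
      · exact ⟨t - t * y, by rwa [sub_eq_zero] at h⟩
    obtain ⟨c, rfl⟩ := hγK
    have hnc : Valued.v (c * c) ≤ 1 := by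
      rw [← nr_coe' c]
      exact hn
    have hvc : Valued.v c ≤ 1 := by
      by_contra h
      have h' : (1 : NNReal) < Valued.v c := not_le.mp h
      have := mul_lt_mul'' h' h' (by norm_num) (by norm_num)
      rw [one_mul, ← map_mul] at this
      exact (not_le.mpr this) hnc
    have : Valued.v t ≤ 1 := by
      have hre : ((c : ℍ[K,a,b])).re = c := rfl
      rw [ht, hre, map_mul]
      calc Valued.v (2 : K) * Valued.v c ≤ 1 * 1 := mul_le_mul' hv2 hvc
        _ = 1 := mul_one 1
    exact (not_le.mpr hvt) this
  -- definition of w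
  set w : ℍ[K,a,b] → NNReal := fun α => NNReal.sqrt (Valued.v ((α * star α).re)) with hw
  have hsq : ∀ α : ℍ[K,a,b], (w α) ^ 2 = Valued.v ((α * star α).re) := by
    intro α; rw [hw]; exact NNReal.sq_sqrt _
  have hmul : ∀ α β : ℍ[K,a,b], w (α * β) = w α * w β := by
    intro α β
    simp only [hw]
    rw [nr_mul', map_mul, NNReal.sqrt_mul]
  have hcoe : ∀ x : K, w ((x : ℍ[K,a,b])) = Valued.v x := by
    intro x
    simp only [hw]
    rw [nr_coe', map_mul, NNReal.sqrt_mul_self]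
  have hone : w 1 = 1 := by
    have := hcoe 1
    rwa [QuaternionAlgebra.coe_one, map_one] at this
  have hzero : ∀ α : ℍ[K,a,b], w α = 0 ↔ α = 0 := by
    intro α
    constructor
    · intro h
      by_contra hα
      obtain ⟨u, hu⟩ := hdiv α hα
      have h1 : w α * w (↑u⁻¹) = 1 := by
        rw [← hmul, ← hu, Units.mul_inv, hone]
      rw [h, zero_mul] at h1
      exact zero_ne_one h1
    · rintro rfl
      simp [hw]
  -- main ultrametric step
  have hmain : ∀ α β : ℍ[K,a,b], α ≠ 0 → w β ≤ w α → w (α + β) ≤ w α := by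
    intro α β hα hle
    obtain ⟨u, hu⟩ := hdiv α hα
    set γ : ℍ[K,a,b] := ↑u⁻¹ * β with hγdef
    have hβγ : β = α * γ := by
      rw [hγdef, ← hu, ← mul_assoc, Units.mul_inv, one_mul]
    have hsum_eq : α + β = α * (1 + γ) := by rw [hβγ, mul_add, mul_one]
    have hwα : w α ≠ 0 := fun h => hα ((hzero α).mp h)
    have hγ1 : w γ ≤ 1 := by
      have hh : w α * w γ = w β := by rw [← hmul, ← hβγ]
      have : w α * w γ ≤ w α * 1 := by rw [mul_one, hh]; exact hle
      exact le_of_mul_le_mul_left this (pos_iff_ne_zero.mpr hwα)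
    have hnγ : Valued.v ((γ * star γ).re) ≤ 1 := by
      rw [← hsq γ]
      exact pow_le_one' hγ1 2
    have htγ := key γ hnγ
    have h1γ : Valued.v (((1 + γ) * star (1 + γ)).re) ≤ 1 := by
      rw [nr_one_add']
      refine le_trans (Valuation.map_add_le_max' _ _ _) (max_le ?_ hnγ)
      refine le_trans (Valuation.map_add_le_max' _ _ _) (max_le ?_ htγ)
      simp
    have hw1γ : w (1 + γ) ≤ 1 := by
      rw [hw]
      exact NNReal.sqrt_le_one.mpr h1γ
    calc w (α + β) = w α * w (1 + γ) := by rw [hsum_eq, hmul]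
      _ ≤ w α * 1 := mul_le_mul_right hw1γ _
      _ = w α := mul_one _
  have hult : ∀ α β : ℍ[K,a,b], w (α + β) ≤ max (w α) (w β) := by
    intro α β
    rcases eq_or_ne α 0 with rfl | hα
    · rw [zero_add]; exact le_max_right _ _
    rcases eq_or_ne β 0 with rfl | hβ
    · rw [add_zero]; exact le_max_left _ _
    rcases le_total (w β) (w α) with h | h
    · exact le_trans (hmain α β hα h) (le_max_left _ _)
    · rw [add_comm]
      exact le_trans (hmain β α hβ h) (le_max_right _ _)
  refine ⟨w, ⟨hcoe, hmul, hult, hzero⟩, hsq, ?_⟩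
  -- uniqueness
  rintro w' ⟨h1', h2', h3', h4'⟩
  have hone' : w' 1 = 1 := by
    have := h1' 1
    rwa [QuaternionAlgebra.coe_one, map_one] at this
  have hconj : ∀ (u : (ℍ[K,a,b])ˣ) (β : ℍ[K,a,b]), w' (↑u * β * ↑u⁻¹) = w' β := by
    intro u β
    have huinv : w' ↑u * w' ↑u⁻¹ = 1 := by
      rw [← h2', Units.mul_inv, hone']
    calc w' (↑u * β * ↑u⁻¹) = w' ↑u * w' β * w' ↑u⁻¹ := by rw [h2', h2']
      _ = w' β * (w' ↑u * w' ↑u⁻¹) := by ring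
      _ = w' β := by rw [huinv, mul_one]
  have hstar : ∀ α : ℍ[K,a,b], w' (star α) = w' α := by
    intro α
    by_cases him : α.imI = 0 ∧ α.imJ = 0 ∧ α.imK = 0
    · have : star α = α := by
        ext <;> simp [QuaternionAlgebra.re_star, QuaternionAlgebra.imI_star,
          QuaternionAlgebra.imJ_star, QuaternionAlgebra.imK_star, him.1, him.2.1, him.2.2]
      rw [this]
    · obtain ⟨q, hq0, hqc⟩ : ∃ q : ℍ[K,a,b], q ≠ 0 ∧ q * α = star α * q := by
        by_cases hIJ : α.imI = 0 ∧ α.imJ = 0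
        · refine ⟨⟨0, 1, 0, 0⟩, ?_, ?_⟩
          · intro h
            have : (1 : K) = 0 := congrArg QuaternionAlgebra.imI h
            exact one_ne_zero this
          · ext <;> simp [QuaternionAlgebra.re_mul, QuaternionAlgebra.imI_mul, QuaternionAlgebra.imJ_mul,
              QuaternionAlgebra.imK_mul, QuaternionAlgebra.re_star, QuaternionAlgebra.imI_star,
              QuaternionAlgebra.imJ_star, QuaternionAlgebra.imK_star, hIJ.1, hIJ.2] <;> try ring
        · refine ⟨⟨0, b * α.imJ, -(a * α.imI), 0⟩, ?_, ?_⟩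
          · intro h
            rcases not_and_or.mp hIJ with hI | hJ
            · refine hI ?_
              have h6 : -(a * α.imI) = 0 := congrArg QuaternionAlgebra.imJ h
              simpa [ha] using h6
            · refine hJ ?_
              have h6 : b * α.imJ = 0 := congrArg QuaternionAlgebra.imI h
              simpa [hb] using h6
          · ext <;> simp [QuaternionAlgebra.re_mul, QuaternionAlgebra.imI_mul, QuaternionAlgebra.imJ_mul,
              QuaternionAlgebra.imK_mul, QuaternionAlgebra.re_star, QuaternionAlgebra.imI_star,
              QuaternionAlgebra.imJ_star, QuaternionAlgebra.imK_star] <;> try ring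
      obtain ⟨u, hu⟩ := hdiv q hq0
      have hrep : star α = ↑u * α * ↑u⁻¹ := by
        have h5 : star α * q * ↑u⁻¹ = star α := by
          rw [← hu, mul_assoc, Units.mul_inv, mul_one]
        rw [← hqc, ← hu] at h5
        exact h5.symm
      rw [hrep, hconj]
  funext α
  have hsq' : (w' α) ^ 2 = Valued.v ((α * star α).re) := by
    have hh : w' α * w' (star α) = w' (α * star α) := (h2' _ _).symm
    rw [hstar α] at hh
    have hcoe2 : w' (α * star α) = Valued.v ((α * star α).re) := by
      rw [QuaternionAlgebra.mul_star_eq_coe α]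
      exact h1' _
    rw [sq, hh, hcoe2]
  have : (w' α) ^ 2 = (w α) ^ 2 := by rw [hsq', hsq α]
  have := congrArg NNReal.sqrt this
  rwa [NNReal.sqrt_sq, NNReal.sqrt_sq] at this
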